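/- For distinct a, b, c, d ∈ ℝ, the quantity f(a,b,c,d) = exp[a,a,b,c]·exp[d,d,b,c] + exp[b,b,a,d]·exp[c,c,a,d] − exp[a,b,c,d]² equals (h(a,c)h(b,d) + h(a,b)h(c,d) − h(b,c)h(a,d)) / (2(a−b)(a−c)(b−d)(c−d)), where h(x,y) = e^x + e^y − 2·exp[x,y]. -/

import Mathlib

open MeasureTheory Real Filter Finset Asymptotics

/-- Divided difference of the exponential at nodes `x 0, …, x n`
(Hermite–Genocchi iterated-integral form, valid for repeated nodes). -/
noncomputable def expDD {n : ℕ} (x : Fin (n + 1) → ℝ) : ℝ :=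
  ∫ t in {t : Fin n → ℝ | (∀ i, 0 ≤ t i ∧ t i ≤ 1) ∧ ∀ i j : Fin n, i ≤ j → t j ≤ t i},
    Real.exp (x 0 + ∑ i : Fin n, t i * (x i.succ - x i.castSucc))

/-- Node tuple `a 0 ≤ … ≤ a (n-1)` followed by `x` with multiplicity `p+1`
and `y` with multiplicity `q+1`. -/
noncomputable def nodesPQ (n p q : ℕ) (a : Fin n → ℝ) (x y : ℝ) :
    Fin (n + (p + 1) + (q + 1)) → ℝ := fun i =>
  if h : (i : ℕ) < n then a ⟨i, h⟩ else if (i : ℕ) < n + (p + 1) then x else y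

/-- `Kₙ(x,y) = exp[a₁,…,aₙ, x^(p+1), y^(q+1)]`. -/
noncomputable def Kn (n p q : ℕ) (a : Fin n → ℝ) (x y : ℝ) : ℝ :=
  expDD (nodesPQ n p q a x y)

/-- Beta-weighted integral form of `exp[x^(p+1), y^(q+1)]`. -/
noncomputable def K0int (p q : ℕ) (x y : ℝ) : ℝ :=
  (1 / ((Nat.factorial p : ℝ) * (Nat.factorial q : ℝ))) *
    ∫ τ in (0:ℝ)..1, τ ^ p * (1 - τ) ^ q * Real.exp (τ * x + (1 - τ) * y)

/-- First divided difference of the exponential. -/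
noncomputable def dd1 (x y : ℝ) : ℝ :=
  if x = y then Real.exp x else (Real.exp x - Real.exp y) / (x - y)

/-- `h(x,y) = eˣ + eʸ − 2·exp[x,y]`. -/
noncomputable def hxy (x y : ℝ) : ℝ := Real.exp x + Real.exp y - 2 * dd1 x y

/-- `φ(u) = cosh u − sinh u / u`, with `φ(0)=0`. -/
noncomputable def phi (u : ℝ) : ℝ :=
  if u = 0 then 0 else Real.cosh u - Real.sinh u / u

/-- Lower incomplete gamma `γ(n,z) = ∫₀ᶻ t^(n-1) e^(−t) dt` (oriented integral). -/
noncomputable def lowerGamma (n : ℕ) (z : ℝ) : ℝ :=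
  ∫ t in (0:ℝ)..z, t ^ (n - 1) * Real.exp (-t)

/-- Sum of the `k` largest coordinates of `y`. -/
noncomputable def topSum {m : ℕ} (k : ℕ) (y : Fin m → ℝ) : ℝ :=
  sSup {t : ℝ | ∃ S : Finset (Fin m), S.card = k ∧ t = ∑ i ∈ S, y i}

/-- `e^{−t[x₀,…,x_m]}`: the divided difference of `s ↦ e^{−t s}` at the nodes `x`. -/
noncomputable def ddExpNeg (t : ℝ) {m : ℕ} (x : Fin (m + 1) → ℝ) : ℝ :=
  (-t) ^ m * expDD fun i => -t * x i


section Aux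

noncomputable def E3 : (ℝ × ℝ × ℝ) ≃ᵐ (Fin 3 → ℝ) :=
  (MeasurableEquiv.prodCongr (MeasurableEquiv.refl ℝ) MeasurableEquiv.finTwoArrow.symm).trans
    (MeasurableEquiv.piFinSuccAbove (fun _ => ℝ) 0).symm

lemma E3_apply (p : ℝ × ℝ × ℝ) : E3 p = ![p.1, p.2.1, p.2.2] := by
  funext i
  fin_cases i <;>
    first
    | rfl
    | simp [E3, MeasurableEquiv.prodCongr, MeasurableEquiv.trans, MeasurableEquiv.piFinSuccAbove,
      Fin.insertNthEquiv, MeasurableEquiv.finTwoArrow, MeasurableEquiv.piFinTwo, piFinTwoEquiv]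

lemma E3_mp : MeasurePreserving E3 volume volume := by
  have h1 : MeasurePreserving (MeasurableEquiv.piFinSuccAbove (fun _ : Fin 3 => ℝ) 0).symm
      ((volume : Measure ℝ).prod volume) volume :=
    (volume_preserving_piFinSuccAbove (fun _ : Fin 3 => ℝ) 0).symm
  have h2 : MeasurePreserving
      (MeasurableEquiv.prodCongr (MeasurableEquiv.refl ℝ)
        (MeasurableEquiv.finTwoArrow (α := ℝ)).symm)
      (volume : Measure (ℝ × ℝ × ℝ)) ((volume : Measure ℝ).prod volume) := by
    have := (measurePreserving_finTwoArrow (volume : Measure ℝ)).symm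
    exact (MeasurePreserving.id volume).prod this
  exact h1.comp h2


lemma nested2 (t0 : ℝ) (ht0 : 0 ≤ t0) (g : ℝ × ℝ → ℝ) (hg : Continuous g) :
    ∫ q in {q : ℝ × ℝ | q.1 ∈ Set.Icc 0 t0 ∧ q.2 ∈ Set.Icc 0 q.1}, g q
      = ∫ t1 in (0:ℝ)..t0, ∫ t2 in (0:ℝ)..t1, g (t1, t2) := by
  set T : Set (ℝ × ℝ) := {q : ℝ × ℝ | q.1 ∈ Set.Icc 0 t0 ∧ q.2 ∈ Set.Icc 0 q.1} with hTdef
  have hTclosed : IsClosed T := by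
    have : T = ({q : ℝ × ℝ | 0 ≤ q.1} ∩ {q | q.1 ≤ t0}) ∩
        ({q : ℝ × ℝ | 0 ≤ q.2} ∩ {q | q.2 ≤ q.1}) := by
      ext q; simp [hTdef, Set.mem_Icc]
    rw [this]
    exact (((isClosed_le continuous_const continuous_fst).inter
      (isClosed_le continuous_fst continuous_const)).inter
      ((isClosed_le continuous_const continuous_snd).inter
        (isClosed_le continuous_snd continuous_fst)))
  have hTm : MeasurableSet T := hTclosed.measurableSet
  have hTsub : T ⊆ Set.Icc (0, 0) (t0, t0) := by
    rintro ⟨a, b⟩ ⟨⟨h1, h2⟩, ⟨h3, h4⟩⟩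
    exact ⟨⟨h1, h3⟩, ⟨h2, le_trans h4 h2⟩⟩
  have hTcomp : IsCompact T := (isCompact_Icc).of_isClosed_subset hTclosed hTsub
  have hInt : IntegrableOn g T := hg.continuousOn.integrableOn_compact hTcomp
  rw [← integral_indicator hTm]
  rw [Measure.volume_eq_prod, integral_prod _ (hInt.integrable_indicator hTm)]
  have key : ∀ t1 : ℝ, (fun t2 => T.indicator g (t1, t2))
      = fun t2 => (Set.Icc (0:ℝ) t0).indicator
          (fun _ => (Set.Icc (0:ℝ) t1).indicator (fun t2 => g (t1, t2)) t2) t1 := by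
    intro t1; funext t2
    simp only [Set.indicator_apply, hTdef, Set.mem_setOf_eq]
    simp only [Set.mem_Icc]
    by_cases h1 : (0 ≤ t1 ∧ t1 ≤ t0) <;> by_cases h2 : (0 ≤ t2 ∧ t2 ≤ t1) <;> simp [h1, h2]
  simp only [key]
  rw [show (fun t1 => ∫ t2, (Set.Icc (0:ℝ) t0).indicator
      (fun _ => (Set.Icc (0:ℝ) t1).indicator (fun t2 => g (t1, t2)) t2) t1)
    = fun t1 => (Set.Icc (0:ℝ) t0).indicator
      (fun t1' => ∫ t2, (Set.Icc (0:ℝ) t1').indicator (fun t2 => g (t1', t2)) t2) t1 from by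
      funext t1
      by_cases h : t1 ∈ Set.Icc (0:ℝ) t0 <;> simp [h]]
  rw [integral_indicator measurableSet_Icc, integral_Icc_eq_integral_Ioc,
    ← intervalIntegral.integral_of_le ht0]
  refine intervalIntegral.integral_congr fun t1 ht1 => ?_
  rw [integral_indicator measurableSet_Icc, integral_Icc_eq_integral_Ioc]
  rw [Set.uIcc_of_le ht0] at ht1
  rw [← intervalIntegral.integral_of_le ht1.1]

lemma nested3 (g : ℝ × ℝ × ℝ → ℝ) (hg : Continuous g) :
    ∫ p in {p : ℝ × ℝ × ℝ | p.1 ∈ Set.Icc (0:ℝ) 1 ∧ p.2.1 ∈ Set.Icc 0 p.1 ∧ p.2.2 ∈ Set.Icc 0 p.2.1}, g p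
      = ∫ t0 in (0:ℝ)..1, ∫ t1 in (0:ℝ)..t0, ∫ t2 in (0:ℝ)..t1, g (t0, t1, t2) := by
  set T : Set (ℝ × ℝ × ℝ) :=
    {p : ℝ × ℝ × ℝ | p.1 ∈ Set.Icc (0:ℝ) 1 ∧ p.2.1 ∈ Set.Icc 0 p.1 ∧ p.2.2 ∈ Set.Icc 0 p.2.1} with hTdef
  have hTclosed : IsClosed T := by
    have : T = ({p : ℝ × ℝ × ℝ | 0 ≤ p.1} ∩ {p | p.1 ≤ 1}) ∩
        (({p : ℝ × ℝ × ℝ | 0 ≤ p.2.1} ∩ {p | p.2.1 ≤ p.1}) ∩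
          ({p : ℝ × ℝ × ℝ | 0 ≤ p.2.2} ∩ {p | p.2.2 ≤ p.2.1})) := by
      ext p; simp [hTdef, Set.mem_Icc]
    rw [this]
    have c1 : Continuous fun p : ℝ × ℝ × ℝ => p.1 := continuous_fst
    have c2 : Continuous fun p : ℝ × ℝ × ℝ => p.2.1 := continuous_snd.fst
    have c3 : Continuous fun p : ℝ × ℝ × ℝ => p.2.2 := continuous_snd.snd
    exact ((isClosed_le continuous_const c1).inter (isClosed_le c1 continuous_const)).inter
      (((isClosed_le continuous_const c2).inter (isClosed_le c2 c1)).inter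
        ((isClosed_le continuous_const c3).inter (isClosed_le c3 c2)))
  have hTm : MeasurableSet T := hTclosed.measurableSet
  have hTsub : T ⊆ Set.Icc ((0:ℝ), (0:ℝ), (0:ℝ)) (1, 1, 1) := by
    rintro ⟨a, b, c⟩ ⟨⟨h1, h2⟩, ⟨h3, h4⟩, ⟨h5, h6⟩⟩
    exact ⟨⟨h1, h3, h5⟩, ⟨h2, le_trans h4 h2, le_trans h6 (le_trans h4 h2)⟩⟩
  have hTcomp : IsCompact T := (isCompact_Icc).of_isClosed_subset hTclosed hTsub
  have hInt : IntegrableOn g T := hg.continuousOn.integrableOn_compact hTcomp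
  rw [← integral_indicator hTm]
  rw [Measure.volume_eq_prod, integral_prod _ (hInt.integrable_indicator hTm)]
  have key : ∀ (t0 : ℝ) (q : ℝ × ℝ), T.indicator g (t0, q)
      = (Set.Icc (0:ℝ) 1).indicator
          (fun t0' => {q : ℝ × ℝ | q.1 ∈ Set.Icc 0 t0' ∧ q.2 ∈ Set.Icc 0 q.1}.indicator
            (fun q' => g (t0', q')) q) t0 := by
    intro t0 q
    simp only [Set.indicator_apply, hTdef, Set.mem_setOf_eq, Set.mem_Icc]
    by_cases h1 : (0 ≤ t0 ∧ t0 ≤ 1) <;>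
      by_cases h2 : ((0 ≤ q.1 ∧ q.1 ≤ t0) ∧ 0 ≤ q.2 ∧ q.2 ≤ q.1) <;> simp [h1, h2]
  simp only [key]
  rw [show (fun t0 => ∫ q : ℝ × ℝ, (Set.Icc (0:ℝ) 1).indicator
      (fun t0' => {q : ℝ × ℝ | q.1 ∈ Set.Icc 0 t0' ∧ q.2 ∈ Set.Icc 0 q.1}.indicator
        (fun q' => g (t0', q')) q) t0)
    = fun t0 => (Set.Icc (0:ℝ) 1).indicator
      (fun t0' => ∫ q : ℝ × ℝ, {q : ℝ × ℝ | q.1 ∈ Set.Icc 0 t0' ∧ q.2 ∈ Set.Icc 0 q.1}.indicator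
        (fun q' => g (t0', q')) q) t0 from by
      funext t0
      by_cases h : t0 ∈ Set.Icc (0:ℝ) 1 <;> simp [h]]
  rw [integral_indicator measurableSet_Icc, integral_Icc_eq_integral_Ioc,
    ← intervalIntegral.integral_of_le (zero_le_one' ℝ)]
  refine intervalIntegral.integral_congr fun t0 ht0 => ?_
  rw [Set.uIcc_of_le (zero_le_one' ℝ)] at ht0
  have hT2closed : IsClosed {q : ℝ × ℝ | q.1 ∈ Set.Icc (0:ℝ) t0 ∧ q.2 ∈ Set.Icc 0 q.1} := by
    have : {q : ℝ × ℝ | q.1 ∈ Set.Icc (0:ℝ) t0 ∧ q.2 ∈ Set.Icc 0 q.1}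
        = ({q : ℝ × ℝ | 0 ≤ q.1} ∩ {q | q.1 ≤ t0}) ∩
          ({q : ℝ × ℝ | 0 ≤ q.2} ∩ {q | q.2 ≤ q.1}) := by
      ext q; simp [Set.mem_Icc]
    rw [this]
    exact (((isClosed_le continuous_const continuous_fst).inter
      (isClosed_le continuous_fst continuous_const)).inter
      ((isClosed_le continuous_const continuous_snd).inter
        (isClosed_le continuous_snd continuous_fst)))
  rw [integral_indicator hT2closed.measurableSet]
  exact nested2 t0 ht0.1 (fun q => g (t0, q)) (hg.comp (continuous_const.prodMk continuous_id))

lemma expDD4 (x : Fin 4 → ℝ) :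
    expDD x = ∫ t0 in (0:ℝ)..1, ∫ t1 in (0:ℝ)..t0, ∫ t2 in (0:ℝ)..t1,
      Real.exp (x 0 + t0 * (x 1 - x 0) + t1 * (x 2 - x 1) + t2 * (x 3 - x 2)) := by
  rw [expDD, ← E3_mp.setIntegral_preimage_emb E3.measurableEmbedding]
  have hset : E3 ⁻¹' {t : Fin 3 → ℝ | (∀ i, 0 ≤ t i ∧ t i ≤ 1) ∧ ∀ i j : Fin 3, i ≤ j → t j ≤ t i}
      = {p : ℝ × ℝ × ℝ | p.1 ∈ Set.Icc (0:ℝ) 1 ∧ p.2.1 ∈ Set.Icc 0 p.1 ∧ p.2.2 ∈ Set.Icc 0 p.2.1} := by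
    ext p
    simp only [Set.mem_preimage, E3_apply, Set.mem_setOf_eq, Set.mem_Icc]
    constructor
    · rintro ⟨h1, h2⟩
      have e01 := h2 0 1 (by decide)
      have e12 := h2 1 2 (by decide)
      have g0 := h1 0; have g1 := h1 1; have g2 := h1 2
      simp only [Matrix.cons_val_zero, Matrix.cons_val_one, Matrix.head_cons] at *
      exact ⟨⟨g0.1, g0.2⟩, ⟨g1.1, e01⟩, ⟨g2.1, e12⟩⟩
    · rintro ⟨⟨a1, a2⟩, ⟨b1, b2⟩, ⟨c1, c2⟩⟩
      constructor
      · intro i; fin_cases i <;> simp <;> constructor <;> linarith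
      · intro i j hij; fin_cases i <;> fin_cases j <;> simp_all <;> linarith
  rw [hset]
  simp only [E3_apply, Fin.sum_univ_three, Matrix.cons_val_zero, Matrix.cons_val_one,
    Matrix.head_cons, show ((0:Fin 3).succ : Fin 4) = 1 from rfl,
    show ((1:Fin 3).succ : Fin 4) = 2 from rfl, show ((2:Fin 3).succ : Fin 4) = 3 from rfl,
    show ((0:Fin 3).castSucc : Fin 4) = 0 from rfl, show ((1:Fin 3).castSucc : Fin 4) = 1 from rfl,
    show ((2:Fin 3).castSucc : Fin 4) = 2 from rfl, ← add_assoc]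
  exact nested3 (fun p => Real.exp (x 0 + p.1 * (x 1 - x 0) + p.2.1 * (x 2 - x 1)
      + p.2.2 * (x 3 - x 2))) (by fun_prop)


lemma hasDerivAt_expLin (B d t : ℝ) :
    HasDerivAt (fun s => Real.exp (B + s * d)) (Real.exp (B + t * d) * d) t := by
  simpa using (((hasDerivAt_id t).mul_const d).const_add B).exp

lemma intExp (B d : ℝ) (hd : d ≠ 0) (T : ℝ) :
    ∫ t in (0:ℝ)..T, Real.exp (B + t * d) = (Real.exp (B + T * d) - Real.exp B) / d := by
  have key : ∀ t ∈ Set.uIcc (0:ℝ) T, HasDerivAt (fun s => Real.exp (B + s * d) / d)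
      (Real.exp (B + t * d)) t := by
    intro t _
    have := (hasDerivAt_expLin B d t).div_const d
    refine this.congr_deriv ?_
    field_simp
  rw [intervalIntegral.integral_eq_sub_of_hasDerivAt key
    (Continuous.intervalIntegrable (by fun_prop) _ _)]
  norm_num
  ring

lemma tripleA (w x y z : ℝ) (hxw : x ≠ w) (hyx : y ≠ x) (hyw : y ≠ w) (hzx : z ≠ x)
    (hzy : z ≠ y) (hzw : z ≠ w) :
    ∫ t0 in (0:ℝ)..1, ∫ t1 in (0:ℝ)..t0, ∫ t2 in (0:ℝ)..t1,
        Real.exp (w + t0 * (x - w) + t1 * (y - x) + t2 * (z - y))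
      = (((Real.exp z - Real.exp w)/(z-w) - (Real.exp x - Real.exp w)/(x-w))/(z-x)
          - ((Real.exp y - Real.exp w)/(y-w) - (Real.exp x - Real.exp w)/(x-w))/(y-x))/(z-y) := by
  have h1 : ∀ t0 t1 : ℝ, (∫ t2 in (0:ℝ)..t1,
        Real.exp (w + t0 * (x - w) + t1 * (y - x) + t2 * (z - y)))
      = (Real.exp (w + t0 * (x - w) + t1 * (z - x))
          - Real.exp (w + t0 * (x - w) + t1 * (y - x))) / (z - y) := by
    intro t0 t1
    rw [intExp _ _ (sub_ne_zero.mpr hzy)]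
    rw [show w + t0 * (x - w) + t1 * (y - x) + t1 * (z - y)
      = w + t0 * (x - w) + t1 * (z - x) from by ring]
  have h2 : ∀ t0 : ℝ, (∫ t1 in (0:ℝ)..t0,
        (Real.exp (w + t0 * (x - w) + t1 * (z - x))
          - Real.exp (w + t0 * (x - w) + t1 * (y - x))) / (z - y))
      = ((Real.exp (w + t0 * (z - w)) - Real.exp (w + t0 * (x - w)))/(z-x)
          - (Real.exp (w + t0 * (y - w)) - Real.exp (w + t0 * (x - w)))/(y-x))/(z-y) := by
    intro t0
    have key : ∀ t ∈ Set.uIcc (0:ℝ) t0, HasDerivAt (fun s =>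
        (Real.exp (w + t0 * (x - w) + s * (z - x)) / (z - x)
          - Real.exp (w + t0 * (x - w) + s * (y - x)) / (y - x)) / (z - y))
        ((Real.exp (w + t0 * (x - w) + t * (z - x))
          - Real.exp (w + t0 * (x - w) + t * (y - x))) / (z - y)) t := by
      intro t _
      have := (((hasDerivAt_expLin (w + t0 * (x - w)) (z - x) t).div_const (z - x)).sub
        ((hasDerivAt_expLin (w + t0 * (x - w)) (y - x) t).div_const (y - x))).div_const (z - y)
      refine this.congr_deriv ?_
      have h1 : z - x ≠ 0 := sub_ne_zero.mpr hzx
      have h2 : y - x ≠ 0 := sub_ne_zero.mpr hyx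
      field_simp
    rw [intervalIntegral.integral_eq_sub_of_hasDerivAt key
      (Continuous.intervalIntegrable (by fun_prop) _ _)]
    rw [show w + t0 * (x - w) + t0 * (z - x) = w + t0 * (z - w) from by ring,
      show w + t0 * (x - w) + t0 * (y - x) = w + t0 * (y - w) from by ring]
    have h1 : z - x ≠ 0 := sub_ne_zero.mpr hzx
    have h2 : y - x ≠ 0 := sub_ne_zero.mpr hyx
    have h3 : z - y ≠ 0 := sub_ne_zero.mpr hzy
    field_simp
    ring
  have h3 : (∫ t0 in (0:ℝ)..1,
        ((Real.exp (w + t0 * (z - w)) - Real.exp (w + t0 * (x - w)))/(z-x)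
          - (Real.exp (w + t0 * (y - w)) - Real.exp (w + t0 * (x - w)))/(y-x))/(z-y))
      = (((Real.exp z - Real.exp w)/(z-w) - (Real.exp x - Real.exp w)/(x-w))/(z-x)
          - ((Real.exp y - Real.exp w)/(y-w) - (Real.exp x - Real.exp w)/(x-w))/(y-x))/(z-y) := by
    have key : ∀ t ∈ Set.uIcc (0:ℝ) 1, HasDerivAt (fun s =>
        ((Real.exp (w + s * (z - w)) / (z - w) - Real.exp (w + s * (x - w)) / (x - w)) / (z - x)
          - (Real.exp (w + s * (y - w)) / (y - w)
            - Real.exp (w + s * (x - w)) / (x - w)) / (y - x)) / (z - y))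
        (((Real.exp (w + t * (z - w)) - Real.exp (w + t * (x - w)))/(z-x)
          - (Real.exp (w + t * (y - w)) - Real.exp (w + t * (x - w)))/(y-x))/(z-y)) t := by
      intro t _
      have := ((((hasDerivAt_expLin w (z - w) t).div_const (z - w)).sub
          ((hasDerivAt_expLin w (x - w) t).div_const (x - w))).div_const (z - x)).sub
        ((((hasDerivAt_expLin w (y - w) t).div_const (y - w)).sub
          ((hasDerivAt_expLin w (x - w) t).div_const (x - w))).div_const (y - x)) |>.div_const
          (z - y)
      refine this.congr_deriv ?_
      have e1 : z - w ≠ 0 := sub_ne_zero.mpr hzw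
      have e2 : x - w ≠ 0 := sub_ne_zero.mpr hxw
      have e3 : y - w ≠ 0 := sub_ne_zero.mpr hyw
      field_simp
      all_goals ring
    rw [intervalIntegral.integral_eq_sub_of_hasDerivAt key
      (Continuous.intervalIntegrable (by fun_prop) _ _)]
    rw [show w + 1 * (z - w) = z from by ring, show w + 1 * (x - w) = x from by ring,
      show w + 1 * (y - w) = y from by ring]
    have e1 : z - w ≠ 0 := sub_ne_zero.mpr hzw
    have e2 : x - w ≠ 0 := sub_ne_zero.mpr hxw
    have e3 : y - w ≠ 0 := sub_ne_zero.mpr hyw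
    have e4 : z - x ≠ 0 := sub_ne_zero.mpr hzx
    have e5 : y - x ≠ 0 := sub_ne_zero.mpr hyx
    have e6 : z - y ≠ 0 := sub_ne_zero.mpr hzy
    field_simp
    ring
  simp only [h1, h2, h3]

lemma tripleB (p q r : ℝ) (hqp : q ≠ p) (hrq : r ≠ q) (hrp : r ≠ p) :
    ∫ t0 in (0:ℝ)..1, ∫ t1 in (0:ℝ)..t0, ∫ t2 in (0:ℝ)..t1,
        Real.exp (p + t1 * (q - p) + t2 * (r - q))
      = (((Real.exp r - Real.exp p)/(r-p) - Real.exp p)/(r-p)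
          - ((Real.exp q - Real.exp p)/(q-p) - Real.exp p)/(q-p))/(r-q) := by
  have h1 : ∀ t1 : ℝ, (∫ t2 in (0:ℝ)..t1, Real.exp (p + t1 * (q - p) + t2 * (r - q)))
      = (Real.exp (p + t1 * (r - p)) - Real.exp (p + t1 * (q - p))) / (r - q) := by
    intro t1
    rw [intExp _ _ (sub_ne_zero.mpr hrq)]
    rw [show p + t1 * (q - p) + t1 * (r - q) = p + t1 * (r - p) from by ring]
  have h2 : ∀ t0 : ℝ, (∫ t1 in (0:ℝ)..t0,
        (Real.exp (p + t1 * (r - p)) - Real.exp (p + t1 * (q - p))) / (r - q))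
      = ((Real.exp (p + t0 * (r - p)) - Real.exp p)/(r-p)
          - (Real.exp (p + t0 * (q - p)) - Real.exp p)/(q-p))/(r-q) := by
    intro t0
    have key : ∀ t ∈ Set.uIcc (0:ℝ) t0, HasDerivAt (fun s =>
        (Real.exp (p + s * (r - p)) / (r - p) - Real.exp (p + s * (q - p)) / (q - p)) / (r - q))
        ((Real.exp (p + t * (r - p)) - Real.exp (p + t * (q - p))) / (r - q)) t := by
      intro t _
      have := (((hasDerivAt_expLin p (r - p) t).div_const (r - p)).sub
        ((hasDerivAt_expLin p (q - p) t).div_const (q - p))).div_const (r - q)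
      refine this.congr_deriv ?_
      have e1 : r - p ≠ 0 := sub_ne_zero.mpr hrp
      have e2 : q - p ≠ 0 := sub_ne_zero.mpr hqp
      field_simp
    rw [intervalIntegral.integral_eq_sub_of_hasDerivAt key
      (Continuous.intervalIntegrable (by fun_prop) _ _)]
    have e1 : r - p ≠ 0 := sub_ne_zero.mpr hrp
    have e2 : q - p ≠ 0 := sub_ne_zero.mpr hqp
    have e3 : r - q ≠ 0 := sub_ne_zero.mpr hrq
    field_simp
    ring
  have h3 : (∫ t0 in (0:ℝ)..1,
        ((Real.exp (p + t0 * (r - p)) - Real.exp p)/(r-p)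
          - (Real.exp (p + t0 * (q - p)) - Real.exp p)/(q-p))/(r-q))
      = (((Real.exp r - Real.exp p)/(r-p) - Real.exp p)/(r-p)
          - ((Real.exp q - Real.exp p)/(q-p) - Real.exp p)/(q-p))/(r-q) := by
    have key : ∀ t ∈ Set.uIcc (0:ℝ) 1, HasDerivAt (fun s =>
        ((Real.exp (p + s * (r - p)) / (r - p) - s * Real.exp p) / (r - p)
          - (Real.exp (p + s * (q - p)) / (q - p) - s * Real.exp p) / (q - p)) / (r - q))
        (((Real.exp (p + t * (r - p)) - Real.exp p)/(r-p)
          - ((Real.exp (p + t * (q - p)) - Real.exp p))/(q-p))/(r-q)) t := by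
      intro t _
      have := ((((hasDerivAt_expLin p (r - p) t).div_const (r - p)).sub
          ((hasDerivAt_id t).mul_const (Real.exp p))).div_const (r - p)).sub
        ((((hasDerivAt_expLin p (q - p) t).div_const (q - p)).sub
          ((hasDerivAt_id t).mul_const (Real.exp p))).div_const (q - p)) |>.div_const (r - q)
      refine this.congr_deriv ?_
      have e1 : r - p ≠ 0 := sub_ne_zero.mpr hrp
      have e2 : q - p ≠ 0 := sub_ne_zero.mpr hqp
      field_simp
      all_goals ring
    rw [intervalIntegral.integral_eq_sub_of_hasDerivAt key
      (Continuous.intervalIntegrable (by fun_prop) _ _)]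
    rw [show p + 1 * (r - p) = r from by ring, show p + 1 * (q - p) = q from by ring]
    have e1 : r - p ≠ 0 := sub_ne_zero.mpr hrp
    have e2 : q - p ≠ 0 := sub_ne_zero.mpr hqp
    have e3 : r - q ≠ 0 := sub_ne_zero.mpr hrq
    field_simp
    ring
  simp only [h1, h2, h3]

set_option maxHeartbeats 2000000 in
lemma alg (a b c d ea eb ec ed : ℝ)
    (n1 : a - b ≠ 0) (n2 : a - c ≠ 0) (n3 : a - d ≠ 0)
    (n4 : b - c ≠ 0) (n5 : b - d ≠ 0) (n6 : c - d ≠ 0) :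
    (((ec - ea)/(c-a) - ea)/(c-a) - ((eb - ea)/(b-a) - ea)/(b-a))/(c-b)
      * ((((ec - ed)/(c-d) - ed)/(c-d) - ((eb - ed)/(b-d) - ed)/(b-d))/(c-b))
    + (((ed - eb)/(d-b) - eb)/(d-b) - ((ea - eb)/(a-b) - eb)/(a-b))/(d-a)
      * ((((ed - ec)/(d-c) - ec)/(d-c) - ((ea - ec)/(a-c) - ec)/(a-c))/(d-a))
    - ((((ed - ea)/(d-a) - (eb - ea)/(b-a))/(d-b)
        - ((ec - ea)/(c-a) - (eb - ea)/(b-a))/(c-b))/(d-c)) ^ 2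
    = ((ea + ec - 2*((ea - ec)/(a-c))) * (eb + ed - 2*((eb - ed)/(b-d)))
        + (ea + eb - 2*((ea - eb)/(a-b))) * (ec + ed - 2*((ec - ed)/(c-d)))
        - (eb + ec - 2*((eb - ec)/(b-c))) * (ea + ed - 2*((ea - ed)/(a-d))))
      / (2 * (a - b) * (a - c) * (b - d) * (c - d)) := by
  have m1 : b - a ≠ 0 := fun h => n1 (by linarith [sub_eq_zero.mp h])
  have m2 : c - a ≠ 0 := fun h => n2 (by linarith [sub_eq_zero.mp h])
  have m3 : d - a ≠ 0 := fun h => n3 (by linarith [sub_eq_zero.mp h])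
  have m4 : c - b ≠ 0 := fun h => n4 (by linarith [sub_eq_zero.mp h])
  have m5 : d - b ≠ 0 := fun h => n5 (by linarith [sub_eq_zero.mp h])
  have m6 : d - c ≠ 0 := fun h => n6 (by linarith [sub_eq_zero.mp h])
  -- closed form for the repeated-node divided differences
  have hB : ∀ p q r ep eq er : ℝ, q - p ≠ 0 → r - p ≠ 0 → r - q ≠ 0 →
      (((er - ep)/(r-p) - ep)/(r-p) - ((eq - ep)/(q-p) - ep)/(q-p))/(r-q)
        = ((er - ep - ep*(r-p))*(q-p)^2 - (eq - ep - ep*(q-p))*(r-p)^2)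
            / ((r-p)^2*(q-p)^2*(r-q)) := by
    intro p q r ep eq er h1 h2 h3
    field_simp
  have hA : (((ed - ea)/(d-a) - (eb - ea)/(b-a))/(d-b)
        - ((ec - ea)/(c-a) - (eb - ea)/(b-a))/(c-b))/(d-c)
      = (((ed-ea)*(b-a) - (eb-ea)*(d-a))*(c-a)*(c-b)
          - ((ec-ea)*(b-a) - (eb-ea)*(c-a))*(d-a)*(d-b))
        / ((d-a)*(b-a)*(d-b)*(c-a)*(c-b)*(d-c)) := by
    field_simp
  have hh : ∀ x y ex ey : ℝ, x - y ≠ 0 →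
      ex + ey - 2*((ex - ey)/(x-y)) = ((ex + ey)*(x-y) - 2*(ex - ey))/(x-y) := by
    intro x y ex ey h
    field_simp
  rw [hB a b c ea eb ec m1 m2 m4, hB d b c ed eb ec n5 n6 m4,
    hB b a d eb ea ed n1 m5 m3, hB c a d ec ea ed n2 m6 m3, hA,
    hh a c ea ec n2, hh b d eb ed n5, hh a b ea eb n1, hh c d ec ed n6,
    hh b c eb ec n4, hh a d ea ed n3]
  rw [div_mul_div_comm, div_mul_div_comm, div_pow,
    div_mul_div_comm, div_mul_div_comm, div_mul_div_comm]
  set NBa := (ec - ea - ea*(c-a))*(b-a)^2 - (eb - ea - ea*(b-a))*(c-a)^2 with hNBa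
  set NBd := (ec - ed - ed*(c-d))*(b-d)^2 - (eb - ed - ed*(b-d))*(c-d)^2 with hNBd
  set NBb := (ed - eb - eb*(d-b))*(a-b)^2 - (ea - eb - eb*(a-b))*(d-b)^2 with hNBb
  set NBc := (ed - ec - ec*(d-c))*(a-c)^2 - (ea - ec - ec*(a-c))*(d-c)^2 with hNBc
  set NA := ((ed-ea)*(b-a) - (eb-ea)*(d-a))*(c-a)*(c-b)
      - ((ec-ea)*(b-a) - (eb-ea)*(c-a))*(d-a)*(d-b) with hNA
  set Nac := (ea + ec)*(a-c) - 2*(ea - ec) with hNac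
  set Nbd := (eb + ed)*(b-d) - 2*(eb - ed) with hNbd
  set Nab := (ea + eb)*(a-b) - 2*(ea - eb) with hNab
  set Ncd := (ec + ed)*(c-d) - 2*(ec - ed) with hNcd
  set Nbc := (eb + ec)*(b-c) - 2*(eb - ec) with hNbc
  set Nad := (ea + ed)*(a-d) - 2*(ea - ed) with hNad
  set L : ℝ := ((a-b)*(a-c)*(a-d)*(b-c)*(b-d)*(c-d))^2 with hL
  have hL0 : L ≠ 0 := by
    simp only [hL]
    positivity
  have e1 : NBa * NBd / ((c-a)^2*(b-a)^2*(c-b) * ((c-d)^2*(b-d)^2*(c-b)))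
      = (NBa * NBd * ((a-d)^2)) / L := by
    rw [show L = (c-a)^2*(b-a)^2*(c-b) * ((c-d)^2*(b-d)^2*(c-b)) * ((a-d)^2) from by ring]
    exact ((isUnit_iff_ne_zero.mpr (pow_ne_zero 2 n3)).mul_div_mul_right _ _).symm
  have e2 : NBb * NBc / ((d-b)^2*(a-b)^2*(d-a) * ((d-c)^2*(a-c)^2*(d-a)))
      = (NBb * NBc * ((b-c)^2)) / L := by
    rw [show L = (d-b)^2*(a-b)^2*(d-a) * ((d-c)^2*(a-c)^2*(d-a)) * ((b-c)^2) from by ring]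
    exact ((isUnit_iff_ne_zero.mpr (pow_ne_zero 2 n4)).mul_div_mul_right _ _).symm
  have e3 : NA^2 / ((d-a)*(b-a)*(d-b)*(c-a)*(c-b)*(d-c))^2 = NA^2 / L := by
    rw [show ((d-a)*(b-a)*(d-b)*(c-a)*(c-b)*(d-c))^2 = L from by ring]
  have f1 : Nac * Nbd / ((a-c)*(b-d))
      = (Nac * Nbd * ((a-b)*(c-d)*(b-c)*(a-d))) / ((a-b)*(a-c)*(a-d)*(b-c)*(b-d)*(c-d)) := by
    rw [show (a-b)*(a-c)*(a-d)*(b-c)*(b-d)*(c-d)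
      = (a-c)*(b-d) * ((a-b)*(c-d)*(b-c)*(a-d)) from by ring]
    exact ((isUnit_iff_ne_zero.mpr (by positivity : (a-b)*(c-d)*(b-c)*(a-d) ≠ 0)).mul_div_mul_right
      _ _).symm
  have f2 : Nab * Ncd / ((a-b)*(c-d))
      = (Nab * Ncd * ((a-c)*(b-d)*(b-c)*(a-d))) / ((a-b)*(a-c)*(a-d)*(b-c)*(b-d)*(c-d)) := by
    rw [show (a-b)*(a-c)*(a-d)*(b-c)*(b-d)*(c-d)
      = (a-b)*(c-d) * ((a-c)*(b-d)*(b-c)*(a-d)) from by ring]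
    exact ((isUnit_iff_ne_zero.mpr (by positivity : (a-c)*(b-d)*(b-c)*(a-d) ≠ 0)).mul_div_mul_right
      _ _).symm
  have f3 : Nbc * Nad / ((b-c)*(a-d))
      = (Nbc * Nad * ((a-b)*(c-d)*(a-c)*(b-d))) / ((a-b)*(a-c)*(a-d)*(b-c)*(b-d)*(c-d)) := by
    rw [show (a-b)*(a-c)*(a-d)*(b-c)*(b-d)*(c-d)
      = (b-c)*(a-d) * ((a-b)*(c-d)*(a-c)*(b-d)) from by ring]
    exact ((isUnit_iff_ne_zero.mpr (by positivity : (a-b)*(c-d)*(a-c)*(b-d) ≠ 0)).mul_div_mul_right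
      _ _).symm
  rw [e1, e2, e3, f1, f2, f3]
  simp only [← add_div, div_sub_div_same]
  rw [div_div]
  set T : ℝ := NBa * NBd * (a-d)^2 + NBb * NBc * (b-c)^2 - NA^2 with hT
  set S : ℝ := Nac * Nbd * ((a-b)*(c-d)*(b-c)*(a-d)) + Nab * Ncd * ((a-c)*(b-d)*(b-c)*(a-d))
      - Nbc * Nad * ((a-b)*(c-d)*(a-c)*(b-d)) with hS
  have f4 : S / ((a-b)*(a-c)*(a-d)*(b-c)*(b-d)*(c-d) * (2*(a-b)*(a-c)*(b-d)*(c-d)))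
      = (S * ((b-c)*(a-d))) / (2*L) := by
    rw [show 2*L = (a-b)*(a-c)*(a-d)*(b-c)*(b-d)*(c-d) * (2*(a-b)*(a-c)*(b-d)*(c-d))
      * ((b-c)*(a-d)) from by rw [hL]; ring]
    exact ((isUnit_iff_ne_zero.mpr (by positivity : (b-c)*(a-d) ≠ 0)).mul_div_mul_right _ _).symm
  have f5 : T / L = (T * 2) / (2*L) := by
    rw [show 2*L = L*2 from by ring]
    exact ((isUnit_iff_ne_zero.mpr (two_ne_zero)).mul_div_mul_right _ _).symm
  rw [f4, f5]
  congr 1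
  simp only [hT, hS, hNBa, hNBd, hNBb, hNBc, hNA, hNac, hNbd, hNab, hNcd, hNbc, hNad]
  ring


lemma expDD_rep (p q r : ℝ) (hqp : q ≠ p) (hrq : r ≠ q) (hrp : r ≠ p) :
    expDD ![p, p, q, r] = (((Real.exp r - Real.exp p)/(r-p) - Real.exp p)/(r-p)
          - ((Real.exp q - Real.exp p)/(q-p) - Real.exp p)/(q-p))/(r-q) := by
  rw [expDD4]
  simp only [Matrix.cons_val_zero, Matrix.cons_val_one, Matrix.head_cons,
    show (![p, p, q, r] : Fin 4 → ℝ) 2 = q from rfl,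
    show (![p, p, q, r] : Fin 4 → ℝ) 3 = r from rfl, sub_self, mul_zero, add_zero]
  exact tripleB p q r hqp hrq hrp

lemma expDD_distinct (w x y z : ℝ) (hxw : x ≠ w) (hyx : y ≠ x) (hyw : y ≠ w) (hzx : z ≠ x)
    (hzy : z ≠ y) (hzw : z ≠ w) :
    expDD ![w, x, y, z]
      = (((Real.exp z - Real.exp w)/(z-w) - (Real.exp x - Real.exp w)/(x-w))/(z-x)
          - ((Real.exp y - Real.exp w)/(y-w) - (Real.exp x - Real.exp w)/(x-w))/(y-x))/(z-y) := by
  rw [expDD4]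
  simp only [Matrix.cons_val_zero, Matrix.cons_val_one, Matrix.head_cons,
    show (![w, x, y, z] : Fin 4 → ℝ) 2 = y from rfl,
    show (![w, x, y, z] : Fin 4 → ℝ) 3 = z from rfl]
  exact tripleA w x y z hxw hyx hyw hzx hzy hzw

end Aux

set_option maxHeartbeats 1000000 in
theorem stmt11 (a b c d : ℝ) (hab : a ≠ b) (hac : a ≠ c) (had : a ≠ d)
    (hbc : b ≠ c) (hbd : b ≠ d) (hcd : c ≠ d) :
    expDD ![a, a, b, c] * expDD ![d, d, b, c]
        + expDD ![b, b, a, d] * expDD ![c, c, a, d] - (expDD ![a, b, c, d]) ^ 2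
      = (hxy a c * hxy b d + hxy a b * hxy c d - hxy b c * hxy a d)
          / (2 * (a - b) * (a - c) * (b - d) * (c - d)) := by
  rw [expDD_rep a b c hab.symm hbc.symm hac.symm,
    expDD_rep d b c hbd hbc.symm hcd,
    expDD_rep b a d hab had.symm hbd.symm,
    expDD_rep c a d hac had.symm hcd.symm,
    expDD_distinct a b c d hab.symm hbc.symm hac.symm hbd.symm hcd.symm had.symm]
  simp only [hxy, dd1, if_neg hac, if_neg hbd, if_neg hab, if_neg hcd, if_neg hbc, if_neg had]
  exact alg a b c d (Real.exp a) (Real.exp b) (Real.exp c) (Real.exp d)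
    (sub_ne_zero.mpr hab) (sub_ne_zero.mpr hac) (sub_ne_zero.mpr had)
    (sub_ne_zero.mpr hbc) (sub_ne_zero.mpr hbd) (sub_ne_zero.mpr hcd)
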